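/- arXiv:2309.03646 — 2 statements merged into one kernel-verified Lean document; each statement's English description precedes it below -/
import Mathlib

section
/- The projection of the Enneper boundary curve γ(θ;α) = (α cos θ − (α³/3) cos 3θ, −α sin θ − (α³/3) sin 3θ, α² cos 2θ) onto the x–y plane is injective on [0,2π) for 0 < α ≤ 1. -/
open Real

/-- The projection onto the x–y plane of the Enneper boundary curve
`γ(θ;α) = (α cos θ − (α³/3) cos 3θ, −α sin θ − (α³/3) sin 3θ, α² cos 2θ)`. -/
noncomputable def enneperBdryProj (α θ : ℝ) : ℝ × ℝ :=
  (α * Real.cos θ - α ^ 3 / 3 * Real.cos (3 * θ),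
   -(α * Real.sin θ) - α ^ 3 / 3 * Real.sin (3 * θ))

/-- For `0 < α ≤ 1`, the projection of the Enneper boundary curve onto the x–y plane
is injective on `[0, 2π)`. -/
theorem enneper_boundary_projection_injective (α : ℝ) (hα0 : 0 < α) (hα1 : α ≤ 1) :
    Set.InjOn (enneperBdryProj α) (Set.Ico 0 (2 * π)) := by
  intro θ₁ h₁ θ₂ h₂ heq
  obtain ⟨h₁0, h₁2⟩ := h₁
  obtain ⟨h₂0, h₂2⟩ := h₂
  have hx : α * Real.cos θ₁ - α ^ 3 / 3 * Real.cos (3 * θ₁)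
      = α * Real.cos θ₂ - α ^ 3 / 3 * Real.cos (3 * θ₂) := congrArg Prod.fst heq
  have hy : -(α * Real.sin θ₁) - α ^ 3 / 3 * Real.sin (3 * θ₁)
      = -(α * Real.sin θ₂) - α ^ 3 / 3 * Real.sin (3 * θ₂) := congrArg Prod.snd heq
  set c : ℝ := Real.cos (θ₁ - θ₂) with hc_def
  -- squared chord length identities
  have hL : (Real.cos θ₁ - Real.cos θ₂) ^ 2 + (Real.sin θ₁ - Real.sin θ₂) ^ 2
      = 2 - 2 * c := by
    rw [hc_def, Real.cos_sub]
    nlinarith [Real.sin_sq_add_cos_sq θ₁, Real.sin_sq_add_cos_sq θ₂]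
  have h3 : Real.cos (3 * θ₁ - 3 * θ₂) = 4 * c ^ 3 - 3 * c := by
    have : (3 : ℝ) * θ₁ - 3 * θ₂ = 3 * (θ₁ - θ₂) := by ring
    rw [this, Real.cos_three_mul, hc_def]
  have hR : (Real.cos (3 * θ₁) - Real.cos (3 * θ₂)) ^ 2
      + (Real.sin (3 * θ₁) - Real.sin (3 * θ₂)) ^ 2
      = 2 - 2 * (4 * c ^ 3 - 3 * c) := by
    rw [← h3, Real.cos_sub]
    nlinarith [Real.sin_sq_add_cos_sq (3 * θ₁), Real.sin_sq_add_cos_sq (3 * θ₂)]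
  -- component equations rearranged
  have e1 : α * (Real.cos θ₁ - Real.cos θ₂)
      = α ^ 3 / 3 * (Real.cos (3 * θ₁) - Real.cos (3 * θ₂)) := by linarith
  have e2 : α * (Real.sin θ₁ - Real.sin θ₂)
      = -(α ^ 3 / 3) * (Real.sin (3 * θ₁) - Real.sin (3 * θ₂)) := by linarith
  -- sum of squares
  have hsum : α ^ 2 * (2 - 2 * c) = α ^ 6 / 9 * (2 - 2 * (4 * c ^ 3 - 3 * c)) := by
    have q1 := congrArg (fun t => t ^ 2) e1
    have q2 := congrArg (fun t => t ^ 2) e2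
    linear_combination q1 + q2 - α ^ 2 * hL + α ^ 6 / 9 * hR
  have hfact : (1 - c) * (9 * α ^ 2 - α ^ 6 * (2 * c + 1) ^ 2) = 0 := by
    linear_combination (9 / 2 : ℝ) * hsum
  have hc1 : c = 1 := by
    rcases mul_eq_zero.mp hfact with h | h
    · linarith
    · by_contra hne
      have hlt : c < 1 := lt_of_le_of_ne (Real.cos_le_one _) hne
      have hge : -1 ≤ c := Real.neg_one_le_cos _
      have h6 : α ^ 6 ≤ α ^ 2 :=
        pow_le_pow_of_le_one hα0.le hα1 (by norm_num)
      have h6p : 0 < α ^ 6 := by positivity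
      nlinarith [h, h6, h6p,
        mul_pos (show (0:ℝ) < 1 - c by linarith) (show (0:ℝ) < c + 2 by linarith)]
  have hdiff : θ₁ - θ₂ = 0 := by
    have hb1 : -(2 * π) < θ₁ - θ₂ := by linarith
    have hb2 : θ₁ - θ₂ < 2 * π := by linarith
    exact (Real.cos_eq_one_iff_of_lt_of_lt hb1 hb2).mp hc1
  linarith
end

section
/- The nodoid parametrized by N(t,θ) = (x(t) cos θ, x(t) sin θ, z(t)) with x(t) = (cos t + √(cos²t + a))/(2|H|) and z(t) = (1/(2|H|)) ∫₀^t (cos τ + √(cos²τ + a)) cos τ / √(cos²τ + a) dτ is a surface of constant mean curvature with |mean curvature| = |H|, for every a > 0. -/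
open Real

/-- Points of `ℝ³` modeled as triples. -/
abbrev R3 := ℝ × ℝ × ℝ

/-- Euclidean dot product on `ℝ³`. -/
def dot3 (u v : R3) : ℝ := u.1 * v.1 + u.2.1 * v.2.1 + u.2.2 * v.2.2

/-- Cross product on `ℝ³`. -/
def cross3 (u v : R3) : R3 :=
  (u.2.1 * v.2.2 - u.2.2 * v.2.1, u.2.2 * v.1 - u.1 * v.2.2, u.1 * v.2.1 - u.2.1 * v.1)

/-- Euclidean norm on `ℝ³`. -/
noncomputable def norm3 (u : R3) : ℝ := Real.sqrt (dot3 u u)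

/-- Partial derivative in the first coordinate. -/
noncomputable def pd1 {E : Type*} [NormedAddCommGroup E] [NormedSpace ℝ E]
    (f : ℝ × ℝ → E) (p : ℝ × ℝ) : E := deriv (fun s => f (s, p.2)) p.1

/-- Partial derivative in the second coordinate. -/
noncomputable def pd2 {E : Type*} [NormedAddCommGroup E] [NormedSpace ℝ E]
    (f : ℝ × ℝ → E) (p : ℝ × ℝ) : E := deriv (fun s => f (p.1, s)) p.2

/-- First fundamental form coefficient `g₁₁ = ⟨X_x, X_x⟩`. -/
noncomputable def ffE (X : ℝ × ℝ → R3) (p : ℝ × ℝ) : ℝ := dot3 (pd1 X p) (pd1 X p)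

/-- First fundamental form coefficient `g₁₂ = ⟨X_x, X_y⟩`. -/
noncomputable def ffF (X : ℝ × ℝ → R3) (p : ℝ × ℝ) : ℝ := dot3 (pd1 X p) (pd2 X p)

/-- First fundamental form coefficient `g₂₂ = ⟨X_y, X_y⟩`. -/
noncomputable def ffG (X : ℝ × ℝ → R3) (p : ℝ × ℝ) : ℝ := dot3 (pd2 X p) (pd2 X p)

/-- The (unnormalized) normal vector `X_x × X_y`. -/
noncomputable def normalVec (X : ℝ × ℝ → R3) (p : ℝ × ℝ) : R3 := cross3 (pd1 X p) (pd2 X p)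

/-- The unit normal `N = (X_x × X_y)/‖X_x × X_y‖`. -/
noncomputable def unitNormal (X : ℝ × ℝ → R3) (p : ℝ × ℝ) : R3 :=
  (norm3 (normalVec X p))⁻¹ • normalVec X p

/-- Second fundamental form coefficient `h₁₁ = ⟨X_xx, N⟩`. -/
noncomputable def sfh11 (X : ℝ × ℝ → R3) (p : ℝ × ℝ) : ℝ :=
  dot3 (pd1 (pd1 X) p) (unitNormal X p)

/-- Second fundamental form coefficient `h₁₂ = ⟨X_xy, N⟩`. -/
noncomputable def sfh12 (X : ℝ × ℝ → R3) (p : ℝ × ℝ) : ℝ :=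
  dot3 (pd2 (pd1 X) p) (unitNormal X p)

/-- Second fundamental form coefficient `h₂₂ = ⟨X_yy, N⟩`. -/
noncomputable def sfh22 (X : ℝ × ℝ → R3) (p : ℝ × ℝ) : ℝ :=
  dot3 (pd2 (pd2 X) p) (unitNormal X p)

/-- Mean curvature `H = (h₁₁g₂₂ − 2h₁₂g₁₂ + h₂₂g₁₁)/(2(g₁₁g₂₂ − g₁₂²))`. -/
noncomputable def meanCurv (X : ℝ × ℝ → R3) (p : ℝ × ℝ) : ℝ :=
  (sfh11 X p * ffG X p - 2 * sfh12 X p * ffF X p + sfh22 X p * ffE X p) /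
    (2 * (ffE X p * ffG X p - ffF X p ^ 2))

/-- Gaussian curvature `K = (h₁₁h₂₂ − h₁₂²)/(g₁₁g₂₂ − g₁₂²)`. -/
noncomputable def gaussCurv (X : ℝ × ℝ → R3) (p : ℝ × ℝ) : ℝ :=
  (sfh11 X p * sfh22 X p - sfh12 X p ^ 2) / (ffE X p * ffG X p - ffF X p ^ 2)

/-- Surface area density `√(g₁₁g₂₂ − g₁₂²) = ‖X_x × X_y‖`. -/
noncomputable def areaDensity (X : ℝ × ℝ → R3) (p : ℝ × ℝ) : ℝ := norm3 (normalVec X p)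

/-- Laplace–Beltrami operator of the surface `X` applied to `u`,
`Δu = (1/√det g) [∂₁((g₂₂ ∂₁u − g₁₂ ∂₂u)/√det g) + ∂₂((g₁₁ ∂₂u − g₁₂ ∂₁u)/√det g)]`. -/
noncomputable def laplaceBeltrami (X : ℝ × ℝ → R3) (u : ℝ × ℝ → ℝ) (p : ℝ × ℝ) : ℝ :=
  (pd1 (fun q => (ffG X q * pd1 u q - ffF X q * pd2 u q) / areaDensity X q) p +
   pd2 (fun q => (ffE X q * pd2 u q - ffF X q * pd1 u q) / areaDensity X q) p) /
    areaDensity X p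

/-- Radial component `x(t) = (cos t + √(cos²t + a))/(2|H|)` of the nodary curve. -/
noncomputable def nodx (H a t : ℝ) : ℝ :=
  (Real.cos t + Real.sqrt (Real.cos t ^ 2 + a)) / (2 * |H|)

/-- Height component
`z(t) = (1/(2|H|)) ∫₀ᵗ (cos τ + √(cos²τ + a)) cos τ / √(cos²τ + a) dτ` of the nodary curve. -/
noncomputable def nodz (H a t : ℝ) : ℝ :=
  (1 / (2 * |H|)) *
    ∫ τ in (0 : ℝ)..t,
      (Real.cos τ + Real.sqrt (Real.cos τ ^ 2 + a)) * Real.cos τ /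
        Real.sqrt (Real.cos τ ^ 2 + a)

/-- The nodoid `N(t,θ) = (x(t) cos θ, x(t) sin θ, z(t))`, the surface of revolution of
the nodary curve around the z-axis. -/
noncomputable def nodoid (H a : ℝ) (p : ℝ × ℝ) : R3 :=
  (nodx H a p.1 * Real.cos p.2, nodx H a p.1 * Real.sin p.2, nodz H a p.1)


noncomputable def nS (a t : ℝ) : ℝ := Real.sqrt (Real.cos t ^ 2 + a)

noncomputable def nxd (H a t : ℝ) : ℝ :=
  (-Real.sin t - Real.sin t * Real.cos t / nS a t) / (2 * |H|)

noncomputable def nzd (H a t : ℝ) : ℝ :=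
  ((Real.cos t + nS a t) * Real.cos t / nS a t) / (2 * |H|)

noncomputable def nxdd (H a t : ℝ) : ℝ :=
  (-Real.cos t + (Real.sin t ^ 2 - Real.cos t ^ 2) / nS a t
    - Real.sin t ^ 2 * Real.cos t ^ 2 / nS a t ^ 3) / (2 * |H|)

noncomputable def nzdd (H a t : ℝ) : ℝ :=
  (-2 * Real.cos t * Real.sin t / nS a t + Real.cos t ^ 3 * Real.sin t / nS a t ^ 3
    - Real.sin t) / (2 * |H|)

lemma nS_pos (a : ℝ) (ha : 0 < a) (t : ℝ) : 0 < nS a t :=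
  Real.sqrt_pos.2 (by positivity)

lemma nS_sq (a : ℝ) (ha : 0 < a) (t : ℝ) : nS a t ^ 2 = Real.cos t ^ 2 + a :=
  Real.sq_sqrt (by positivity)

lemma nodx_eq (H a t : ℝ) : nodx H a t = (Real.cos t + nS a t) / (2 * |H|) := rfl

lemma nodx_pos (H a : ℝ) (hH : H ≠ 0) (ha : 0 < a) (t : ℝ) : 0 < nodx H a t := by
  have h1 : |Real.cos t| < nS a t := by
    nlinarith [nS_sq a ha t, nS_pos a ha t, sq_abs (Real.cos t), abs_nonneg (Real.cos t)]
  have h2 : 0 < Real.cos t + nS a t := by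
    have := neg_abs_le (Real.cos t); linarith
  have hA : 0 < |H| := abs_pos.2 hH
  rw [nodx_eq]; positivity

lemma hasDerivAt_nS (a : ℝ) (ha : 0 < a) (t : ℝ) :
    HasDerivAt (nS a) (-(Real.sin t * Real.cos t) / nS a t) t := by
  have h1 : HasDerivAt (fun t => Real.cos t ^ 2 + a) (2 * Real.cos t ^ 1 * (-Real.sin t)) t :=
    ((Real.hasDerivAt_cos t).pow 2).add_const a
  have h2 := h1.sqrt (by positivity)
  have hv : 2 * Real.cos t ^ 1 * -Real.sin t / (2 * Real.sqrt (Real.cos t ^ 2 + a))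
      = -(Real.sin t * Real.cos t) / nS a t := by
    rw [show Real.sqrt (Real.cos t ^ 2 + a) = nS a t from rfl]
    ring
  rw [hv] at h2
  exact h2

lemma hasDerivAt_nodx (H a : ℝ) (ha : 0 < a) (t : ℝ) :
    HasDerivAt (nodx H a) (nxd H a t) t := by
  have h := ((Real.hasDerivAt_cos t).add (hasDerivAt_nS a ha t)).div_const (2 * |H|)
  have hv : (-Real.sin t + -(Real.sin t * Real.cos t) / nS a t) / (2 * |H|) = nxd H a t := by
    unfold nxd; ring
  rw [hv] at h
  exact h

lemma cont_integrand (a : ℝ) (ha : 0 < a) :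
    Continuous (fun τ => (Real.cos τ + Real.sqrt (Real.cos τ ^ 2 + a)) * Real.cos τ /
        Real.sqrt (Real.cos τ ^ 2 + a)) := by
  have hSc : Continuous (fun τ : ℝ => Real.sqrt (Real.cos τ ^ 2 + a)) :=
    ((Real.continuous_cos.pow 2).add continuous_const).sqrt
  exact ((Real.continuous_cos.add hSc).mul Real.continuous_cos).div hSc
    (fun t => ne_of_gt (Real.sqrt_pos.2 (by positivity)))

lemma hasDerivAt_nodz (H a : ℝ) (ha : 0 < a) (t : ℝ) :
    HasDerivAt (nodz H a) (nzd H a t) t := by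
  have hc := cont_integrand a ha
  have h1 : HasDerivAt (fun u => ∫ τ in (0:ℝ)..u,
      (Real.cos τ + Real.sqrt (Real.cos τ ^ 2 + a)) * Real.cos τ /
        Real.sqrt (Real.cos τ ^ 2 + a))
      ((Real.cos t + Real.sqrt (Real.cos t ^ 2 + a)) * Real.cos t /
        Real.sqrt (Real.cos t ^ 2 + a)) t :=
    intervalIntegral.integral_hasDerivAt_right (hc.intervalIntegrable 0 t)
      (hc.stronglyMeasurableAtFilter _ _) hc.continuousAt
  have h2 := h1.const_mul (1 / (2 * |H|))
  have hv : 1 / (2 * |H|) * ((Real.cos t + Real.sqrt (Real.cos t ^ 2 + a)) * Real.cos t /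
      Real.sqrt (Real.cos t ^ 2 + a)) = nzd H a t := by
    unfold nzd nS; ring
  rw [hv] at h2
  exact h2

lemma hasDerivAt_nxd (H a : ℝ) (ha : 0 < a) (t : ℝ) :
    HasDerivAt (nxd H a) (nxdd H a t) t := by
  have hS := nS_pos a ha t
  have hSne : nS a t ≠ 0 := ne_of_gt hS
  have h1 : HasDerivAt (fun t => -Real.sin t - Real.sin t * Real.cos t / nS a t)
      (-Real.cos t - ((Real.cos t * Real.cos t + Real.sin t * -Real.sin t) * nS a t -
        Real.sin t * Real.cos t * (-(Real.sin t * Real.cos t) / nS a t)) / nS a t ^ 2) t :=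
    (Real.hasDerivAt_sin t).neg.sub
      (((Real.hasDerivAt_sin t).mul (Real.hasDerivAt_cos t)).div (hasDerivAt_nS a ha t) hSne)
  have h2 := h1.div_const (2 * |H|)
  have hv : (-Real.cos t - ((Real.cos t * Real.cos t + Real.sin t * -Real.sin t) * nS a t -
        Real.sin t * Real.cos t * (-(Real.sin t * Real.cos t) / nS a t)) / nS a t ^ 2) / (2 * |H|)
      = nxdd H a t := by
    unfold nxdd
    congr 1
    field_simp
    ring
  rw [hv] at h2
  exact h2

lemma hasDerivAt_nzd (H a : ℝ) (ha : 0 < a) (t : ℝ) :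
    HasDerivAt (nzd H a) (nzdd H a t) t := by
  have hS := nS_pos a ha t
  have hSne : nS a t ≠ 0 := ne_of_gt hS
  have h1 : HasDerivAt (fun t => (Real.cos t + nS a t) * Real.cos t / nS a t)
      ((((-Real.sin t + -(Real.sin t * Real.cos t) / nS a t) * Real.cos t +
          (Real.cos t + nS a t) * -Real.sin t) * nS a t -
        (Real.cos t + nS a t) * Real.cos t * (-(Real.sin t * Real.cos t) / nS a t)) /
          nS a t ^ 2) t :=
    (((Real.hasDerivAt_cos t).add (hasDerivAt_nS a ha t)).mul (Real.hasDerivAt_cos t)).div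
      (hasDerivAt_nS a ha t) hSne
  have h2 := h1.div_const (2 * |H|)
  have hv : (((((-Real.sin t + -(Real.sin t * Real.cos t) / nS a t) * Real.cos t +
          (Real.cos t + nS a t) * -Real.sin t) * nS a t -
        (Real.cos t + nS a t) * Real.cos t * (-(Real.sin t * Real.cos t) / nS a t)) /
          nS a t ^ 2)) / (2 * |H|) = nzdd H a t := by
    unfold nzdd
    congr 1
    field_simp
    ring
  rw [hv] at h2
  exact h2

lemma pd1_nodoid (H a : ℝ) (ha : 0 < a) (q : ℝ × ℝ) :
    pd1 (nodoid H a) q =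
      (nxd H a q.1 * Real.cos q.2, nxd H a q.1 * Real.sin q.2, nzd H a q.1) := by
  have h : HasDerivAt (fun s => nodoid H a (s, q.2))
      (nxd H a q.1 * Real.cos q.2, nxd H a q.1 * Real.sin q.2, nzd H a q.1) q.1 :=
    ((hasDerivAt_nodx H a ha q.1).mul_const (Real.cos q.2)).prodMk
      (((hasDerivAt_nodx H a ha q.1).mul_const (Real.sin q.2)).prodMk (hasDerivAt_nodz H a ha q.1))
  exact h.deriv

lemma pd2_nodoid (H a : ℝ) (q : ℝ × ℝ) :
    pd2 (nodoid H a) q =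
      (nodx H a q.1 * -Real.sin q.2, nodx H a q.1 * Real.cos q.2, 0) := by
  have h : HasDerivAt (fun s => nodoid H a (q.1, s))
      (nodx H a q.1 * -Real.sin q.2, nodx H a q.1 * Real.cos q.2, 0) q.2 := by
    refine HasDerivAt.prodMk ?_ (HasDerivAt.prodMk ?_ ?_)
    · exact (Real.hasDerivAt_cos q.2).const_mul (nodx H a q.1)
    · exact (Real.hasDerivAt_sin q.2).const_mul (nodx H a q.1)
    · exact hasDerivAt_const q.2 (nodz H a q.1)
  exact h.deriv

lemma pd1_pd1_nodoid (H a : ℝ) (ha : 0 < a) (q : ℝ × ℝ) :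
    pd1 (pd1 (nodoid H a)) q =
      (nxdd H a q.1 * Real.cos q.2, nxdd H a q.1 * Real.sin q.2, nzdd H a q.1) := by
  have e1 : pd1 (nodoid H a) = fun q =>
      ((nxd H a q.1 * Real.cos q.2, nxd H a q.1 * Real.sin q.2, nzd H a q.1) : R3) :=
    funext (pd1_nodoid H a ha)
  rw [e1]
  have h : HasDerivAt (fun s : ℝ =>
      ((nxd H a s * Real.cos q.2, nxd H a s * Real.sin q.2, nzd H a s) : R3))
      (nxdd H a q.1 * Real.cos q.2, nxdd H a q.1 * Real.sin q.2, nzdd H a q.1) q.1 :=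
    ((hasDerivAt_nxd H a ha q.1).mul_const (Real.cos q.2)).prodMk
      (((hasDerivAt_nxd H a ha q.1).mul_const (Real.sin q.2)).prodMk (hasDerivAt_nzd H a ha q.1))
  exact h.deriv

lemma pd2_pd1_nodoid (H a : ℝ) (ha : 0 < a) (q : ℝ × ℝ) :
    pd2 (pd1 (nodoid H a)) q =
      (nxd H a q.1 * -Real.sin q.2, nxd H a q.1 * Real.cos q.2, 0) := by
  have e1 : pd1 (nodoid H a) = fun q =>
      ((nxd H a q.1 * Real.cos q.2, nxd H a q.1 * Real.sin q.2, nzd H a q.1) : R3) :=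
    funext (pd1_nodoid H a ha)
  rw [e1]
  have h : HasDerivAt (fun s : ℝ =>
      ((nxd H a q.1 * Real.cos s, nxd H a q.1 * Real.sin s, nzd H a q.1) : R3))
      (nxd H a q.1 * -Real.sin q.2, nxd H a q.1 * Real.cos q.2, 0) q.2 :=
    ((Real.hasDerivAt_cos q.2).const_mul (nxd H a q.1)).prodMk
      (((Real.hasDerivAt_sin q.2).const_mul (nxd H a q.1)).prodMk
        (hasDerivAt_const q.2 (nzd H a q.1)))
  exact h.deriv

lemma pd2_pd2_nodoid (H a : ℝ) (q : ℝ × ℝ) :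
    pd2 (pd2 (nodoid H a)) q =
      (nodx H a q.1 * -Real.cos q.2, nodx H a q.1 * -Real.sin q.2, 0) := by
  have e1 : pd2 (nodoid H a) = fun q =>
      ((nodx H a q.1 * -Real.sin q.2, nodx H a q.1 * Real.cos q.2, 0) : R3) :=
    funext (pd2_nodoid H a)
  rw [e1]
  have h : HasDerivAt (fun s : ℝ =>
      ((nodx H a q.1 * -Real.sin s, nodx H a q.1 * Real.cos s, 0) : R3))
      (nodx H a q.1 * -Real.cos q.2, nodx H a q.1 * -Real.sin q.2, 0) q.2 :=
    ((Real.hasDerivAt_sin q.2).neg.const_mul (nodx H a q.1)).prodMk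
      (((Real.hasDerivAt_cos q.2).const_mul (nodx H a q.1)).prodMk
        (hasDerivAt_const q.2 (0 : ℝ)))
  exact h.deriv

/-- The nodoid is a surface of constant mean curvature with `|mean curvature| = |H|`,
for every `a > 0` and `H ≠ 0`. -/
theorem nodoid_constant_mean_curvature (H a : ℝ) (hH : H ≠ 0) (ha : 0 < a) :
    ∀ p : ℝ × ℝ, |meanCurv (nodoid H a) p| = |H| := by
  intro p
  obtain ⟨t, θ⟩ := p
  have hA : (0:ℝ) < |H| := abs_pos.2 hH
  have hAne : |H| ≠ 0 := ne_of_gt hA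
  have hS : 0 < nS a t := nS_pos a ha t
  have hSne : nS a t ≠ 0 := ne_of_gt hS
  have hS2 : nS a t ^ 2 = Real.cos t ^ 2 + a := nS_sq a ha t
  have hx : 0 < nodx H a t := nodx_pos H a hH ha t
  have hxne : nodx H a t ≠ 0 := ne_of_gt hx
  have hpy : Real.cos θ ^ 2 + Real.sin θ ^ 2 = 1 := Real.cos_sq_add_sin_sq θ
  have hpyt : Real.cos t ^ 2 + Real.sin t ^ 2 = 1 := Real.cos_sq_add_sin_sq t
  have hxx : nodx H a t * (2 * |H|) = Real.cos t + nS a t := by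
    rw [nodx_eq]; field_simp
  have hxd : nxd H a t = -Real.sin t * nodx H a t / nS a t := by
    unfold nxd; rw [nodx_eq]; field_simp; ring
  have hzd : nzd H a t = Real.cos t * nodx H a t / nS a t := by
    unfold nzd; rw [nodx_eq]; field_simp
  have hE : ffE (nodoid H a) (t, θ) = nodx H a t ^ 2 / nS a t ^ 2 := by
    simp only [ffE, pd1_nodoid H a ha, dot3, hxd, hzd]
    field_simp
    linear_combination (Real.sin t ^ 2) * hpy + hpyt
  have hF : ffF (nodoid H a) (t, θ) = 0 := by
    simp only [ffF, pd1_nodoid H a ha, pd2_nodoid, dot3]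
    ring
  have hG : ffG (nodoid H a) (t, θ) = nodx H a t ^ 2 := by
    simp only [ffG, pd2_nodoid, dot3]
    linear_combination (nodx H a t ^ 2) * hpy
  have hn : normalVec (nodoid H a) (t, θ) =
      (-(nzd H a t) * nodx H a t * Real.cos θ, -(nzd H a t) * nodx H a t * Real.sin θ,
        nxd H a t * nodx H a t) := by
    simp only [normalVec, pd1_nodoid H a ha, pd2_nodoid, cross3, Prod.mk.injEq]
    refine ⟨by ring, by ring, ?_⟩
    linear_combination (nxd H a t * nodx H a t) * hpy
  have hdot : dot3 (normalVec (nodoid H a) (t, θ)) (normalVec (nodoid H a) (t, θ))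
      = (nodx H a t ^ 2 / nS a t) ^ 2 := by
    rw [hn]; simp only [dot3, hxd, hzd]
    field_simp
    linear_combination (Real.cos t ^ 2) * hpy + hpyt
  have hnorm : norm3 (normalVec (nodoid H a) (t, θ)) = nodx H a t ^ 2 / nS a t := by
    unfold norm3
    rw [hdot, Real.sqrt_sq (by positivity)]
  have hN : unitNormal (nodoid H a) (t, θ)
      = (-(Real.cos t * Real.cos θ), -(Real.cos t * Real.sin θ), -Real.sin t) := by
    unfold unitNormal
    rw [hnorm, hn]
    simp only [Prod.smul_mk, smul_eq_mul, Prod.mk.injEq, hxd, hzd]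
    refine ⟨by field_simp, by field_simp, by field_simp⟩
  have h12 : sfh12 (nodoid H a) (t, θ) = 0 := by
    simp only [sfh12, pd2_pd1_nodoid H a ha, hN, dot3]
    ring
  have h22 : sfh22 (nodoid H a) (t, θ) = nodx H a t * Real.cos t := by
    simp only [sfh22, pd2_pd2_nodoid, hN, dot3]
    linear_combination (nodx H a t * Real.cos t) * hpy
  have key : -Real.cos t * nxdd H a t - Real.sin t * nzdd H a t = nodx H a t / nS a t := by
    unfold nxdd nzdd; rw [nodx_eq]
    field_simp
    linear_combination (Real.cos t * nS a t ^ 2 + nS a t ^ 3) * hpyt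
  have h11 : sfh11 (nodoid H a) (t, θ) = nodx H a t / nS a t := by
    simp only [sfh11, pd1_pd1_nodoid H a ha, hN, dot3]
    linear_combination (-Real.cos t * nxdd H a t) * hpy + key
  have hm : meanCurv (nodoid H a) (t, θ) = |H| := by
    unfold meanCurv
    rw [hE, hF, hG, h11, h12, h22]
    field_simp
    linear_combination (-(nodx H a t ^ 3)) * hxx
  rw [hm, abs_abs]
end
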